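/- Let G be an integrable random variable, α ∈ (0,1), λ_α = F_G^{-1}(α) its α-quantile, and suppose P(G = λ_α) = 0. Define the dual variable ξ^α = (1/α)·1{G ≤ λ_α}. Then E[ξ^α] = 1, 0 ≤ ξ^α ≤ 1/α, and E[ξ^α · G] = CVaR_α(G) = (1/α)∫₀^α F_G^{-1}(u) du. -/

import Mathlib

open MeasureTheory

noncomputable section


namespace CVaRAux
open Set Filter Topology

variable (μ : Measure ℝ) [IsProbabilityMeasure μ]

/-- the CDF -/
def F (z : ℝ) : ℝ := (μ (Iic z)).toReal

/-- the quantile -/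
def Q (u : ℝ) : ℝ := sInf {z | u ≤ F μ z}

lemma F_mono : Monotone (F μ) := fun _ _ hab =>
  ENNReal.toReal_mono (measure_ne_top μ _) (measure_mono (Iic_subset_Iic.2 hab))

lemma measure_Iic_eq (z : ℝ) : μ (Iic z) = ENNReal.ofReal (F μ z) := by
  rw [F, ENNReal.ofReal_toReal (measure_ne_top μ _)]

lemma le_F_iff {u : ℝ} (hu : 0 ≤ u) (z : ℝ) :
    u ≤ F μ z ↔ ENNReal.ofReal u ≤ μ (Iic z) :=
  (ENNReal.ofReal_le_iff_le_toReal (measure_ne_top μ _)).symm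

lemma S_nonempty {u : ℝ} (hu : u < 1) : {z | u ≤ F μ z}.Nonempty := by
  have h : Tendsto (fun z => μ (Iic z)) atTop (𝓝 (μ univ)) := tendsto_measure_Iic_atTop μ
  have h2 : Tendsto (F μ) atTop (𝓝 1) := by
    have := (ENNReal.tendsto_toReal (measure_ne_top μ univ)).comp h
    exact (by simpa [Function.comp_def, measure_univ] using this :
      Tendsto (fun x => (μ (Iic x)).toReal) atTop (𝓝 1))
  exact (h2.eventually (eventually_ge_nhds hu)).exists

lemma S_bddBelow {u : ℝ} (hu : 0 < u) : BddBelow {z | u ≤ F μ z} := by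
  have h : Tendsto (fun n : ℕ => μ (Iic (-(n:ℝ)))) atTop (𝓝 (μ (⋂ n : ℕ, Iic (-(n:ℝ))))) := by
    refine tendsto_measure_iInter_atTop (fun n => (measurableSet_Iic).nullMeasurableSet)
      (fun a b hab => Iic_subset_Iic.2 (by exact_mod_cast neg_le_neg (Nat.cast_le.2 hab)))
      ⟨0, measure_ne_top μ _⟩
  have hempty : (⋂ n : ℕ, Iic (-(n:ℝ))) = ∅ := by
    ext x
    simp only [mem_iInter, mem_Iic, mem_empty_iff_false, iff_false, not_forall, not_le]
    obtain ⟨n, hn⟩ := exists_nat_gt (-x)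
    exact ⟨n, by linarith⟩
  rw [hempty, measure_empty] at h
  have : ∀ᶠ n : ℕ in atTop, μ (Iic (-(n:ℝ))) < ENNReal.ofReal u := by
    refine h.eventually_lt_const ?_
    simpa using hu
  obtain ⟨n, hn⟩ := this.exists
  refine ⟨-(n:ℝ), fun z hz => ?_⟩
  by_contra hlt
  push_neg at hlt
  have : u ≤ F μ (-(n:ℝ)) := le_trans hz (F_mono μ hlt.le)
  rw [le_F_iff μ hu.le] at this
  exact absurd (lt_of_le_of_lt this hn) (lt_irrefl _)

lemma le_F_Q {u : ℝ} (hu : u ∈ Set.Ioo (0:ℝ) 1) : u ≤ F μ (Q μ u) := by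
  rw [le_F_iff μ hu.1.le]
  set c := Q μ u with hc
  have key : ∀ n : ℕ, ENNReal.ofReal u ≤ μ (Iic (c + ((n:ℝ)+1)⁻¹)) := by
    intro n
    have hpos : (0:ℝ) < ((n:ℝ)+1)⁻¹ := by positivity
    have : sInf {z | u ≤ F μ z} < c + ((n:ℝ)+1)⁻¹ := by
      show Q μ u < _
      linarith
    obtain ⟨z, hz, hz2⟩ := exists_lt_of_csInf_lt (S_nonempty μ hu.2) this
    have : u ≤ F μ (c + ((n:ℝ)+1)⁻¹) := le_trans hz (F_mono μ hz2.le)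
    rwa [le_F_iff μ hu.1.le] at this
  have h : Tendsto (fun n : ℕ => μ (Iic (c + ((n:ℝ)+1)⁻¹))) atTop
      (𝓝 (μ (⋂ n : ℕ, Iic (c + ((n:ℝ)+1)⁻¹)))) := by
    refine tendsto_measure_iInter_atTop (fun n => (measurableSet_Iic).nullMeasurableSet)
      (fun a b hab => Iic_subset_Iic.2 ?_) ⟨0, measure_ne_top μ _⟩
    have : ((b:ℝ)+1)⁻¹ ≤ ((a:ℝ)+1)⁻¹ := by
      apply inv_anti₀ (by positivity)
      have : (a:ℝ) ≤ b := Nat.cast_le.2 hab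
      linarith
    linarith
  have hinter : (⋂ n : ℕ, Iic (c + ((n:ℝ)+1)⁻¹)) = Iic c := by
    ext x
    simp only [mem_iInter, mem_Iic]
    constructor
    · intro hx
      by_contra hcx
      push_neg at hcx
      obtain ⟨n, hn⟩ := exists_nat_gt (x - c)⁻¹
      have hxc : 0 < x - c := by linarith
      have h1 : ((n:ℝ)+1)⁻¹ < x - c := by
        rw [inv_lt_comm₀ (by positivity) hxc]
        linarith
      linarith [hx n]
    · intro hx n
      have : (0:ℝ) < ((n:ℝ)+1)⁻¹ := by positivity
      linarith
  rw [hinter] at h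
  exact ge_of_tendsto' h key

/-- The Galois connection. -/
lemma gc {u : ℝ} (hu : u ∈ Set.Ioo (0:ℝ) 1) (z : ℝ) :
    Q μ u ≤ z ↔ u ≤ F μ z := by
  constructor
  · intro h; exact le_trans (le_F_Q μ hu) (F_mono μ h)
  · intro h; exact csInf_le (S_bddBelow μ hu.1) h

lemma Q_monotoneOn {a : ℝ} (ha : 0 < a) (hb : a < 1) :
    MonotoneOn (Q μ) (Set.Ioc 0 a) := by
  intro u hu v hv huv
  have hu' : u ∈ Set.Ioo (0:ℝ) 1 := ⟨hu.1, lt_of_le_of_lt hu.2 hb⟩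
  have hv' : v ∈ Set.Ioo (0:ℝ) 1 := ⟨hv.1, lt_of_le_of_lt hv.2 hb⟩
  rw [gc μ hu']
  exact le_trans huv (le_F_Q μ hv')

end CVaRAux

namespace CVaRAux
open Set Filter Topology

variable {μ : Measure ℝ} [IsProbabilityMeasure μ] {α lam : ℝ}

lemma measure_Iic_lam (hα : α ∈ Set.Ioo (0:ℝ) 1) (hlam : lam = Q μ α)
    (hatom : μ {lam} = 0) : μ (Iic lam) = ENNReal.ofReal α := by
  refine le_antisymm ?_ ?_
  · have h1 : μ (Iic lam) = μ (Iio lam) := (measure_congr (Iio_ae_eq_Iic' hatom)).symm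
    rw [h1]
    have hunion : (⋃ n : ℕ, Iic (lam - ((n:ℝ)+1)⁻¹)) = Iio lam := by
      ext x
      simp only [mem_iUnion, mem_Iic, mem_Iio]
      constructor
      · rintro ⟨n, hn⟩
        have : (0:ℝ) < ((n:ℝ)+1)⁻¹ := by positivity
        linarith
      · intro hx
        obtain ⟨n, hn⟩ := exists_nat_gt (lam - x)⁻¹
        have hxl : 0 < lam - x := by linarith
        have h1 : ((n:ℝ)+1)⁻¹ < lam - x := by
          rw [inv_lt_comm₀ (by positivity) hxl]
          linarith
        exact ⟨n, by linarith⟩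
    have htend : Tendsto (fun n : ℕ => μ (Iic (lam - ((n:ℝ)+1)⁻¹))) atTop (𝓝 (μ (Iio lam))) := by
      rw [← hunion]
      refine tendsto_measure_iUnion_atTop (fun a b hab => Iic_subset_Iic.2 ?_)
      have h1 : ((b:ℝ)+1)⁻¹ ≤ ((a:ℝ)+1)⁻¹ := by
        apply inv_anti₀ (by positivity)
        have : (a:ℝ) ≤ b := Nat.cast_le.2 hab
        linarith
      linarith
    refine le_of_tendsto' htend fun n => ?_
    have hlt : ¬ (α ≤ F μ (lam - ((n:ℝ)+1)⁻¹)) := by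
      intro hcon
      have h2 : Q μ α ≤ lam - ((n:ℝ)+1)⁻¹ := (gc μ hα _).2 hcon
      have : (0:ℝ) < ((n:ℝ)+1)⁻¹ := by positivity
      rw [← hlam] at h2
      linarith
    push_neg at hlt
    rw [measure_Iic_eq μ]
    exact ENNReal.ofReal_le_ofReal hlt.le
  · rw [← le_F_iff μ hα.1.le]
    have := le_F_Q μ hα
    rwa [← hlam] at this

lemma F_lam (hα : α ∈ Set.Ioo (0:ℝ) 1) (hlam : lam = Q μ α)
    (hatom : μ {lam} = 0) : F μ lam = α := by
  rw [F, measure_Iic_lam hα hlam hatom, ENNReal.toReal_ofReal hα.1.le]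

lemma Q_aemeasurable (hα : α ∈ Set.Ioo (0:ℝ) 1) :
    AEMeasurable (Q μ) (volume.restrict (Ioc 0 α)) :=
  aemeasurable_restrict_of_monotoneOn measurableSet_Ioc (Q_monotoneOn μ hα.1 hα.2)

lemma map_Q (hα : α ∈ Set.Ioo (0:ℝ) 1) (hlam : lam = Q μ α)
    (hatom : μ {lam} = 0) :
    (volume.restrict (Ioc 0 α)).map (Q μ) = μ.restrict (Iic lam) := by
  have hFlam : F μ lam = α := F_lam hα hlam hatom
  symm
  refine MeasureTheory.Measure.ext_of_Iic _ _ (fun a => ?_)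
  rw [Measure.map_apply₀ (Q_aemeasurable hα) measurableSet_Iic.nullMeasurableSet,
    Measure.restrict_apply' measurableSet_Ioc, Measure.restrict_apply measurableSet_Iic]
  have hset : (Q μ) ⁻¹' (Iic a) ∩ Ioc 0 α = Ioc 0 (min (F μ a) α) := by
    ext u
    simp only [mem_inter_iff, mem_preimage, mem_Iic, mem_Ioc, le_min_iff]
    constructor
    · rintro ⟨h1, h2, h3⟩
      exact ⟨h2, (gc μ ⟨h2, lt_of_le_of_lt h3 hα.2⟩ a).1 h1, h3⟩
    · rintro ⟨h1, h2, h3⟩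
      exact ⟨(gc μ ⟨h1, lt_of_le_of_lt h3 hα.2⟩ a).2 h2, h1, h3⟩
  rw [hset, Real.volume_Ioc]
  have hinter : Iic a ∩ Iic lam = Iic (min a lam) := (Iic_inter_Iic (a := a) (b := lam))
  rw [hinter, measure_Iic_eq μ]
  congr 1
  rcases le_total a lam with h | h
  · have : F μ a ≤ α := hFlam ▸ F_mono μ h
    rw [min_eq_left this, min_eq_left h]
    ring
  · have : α ≤ F μ a := hFlam ▸ F_mono μ h
    rw [min_eq_right this, min_eq_right h, hFlam]
    ring

end CVaRAux


/-- CVaR dual variable (continuous case): with λ_α = F_G⁻¹(α), P(G = λ_α) = 0,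
and ξ^α = (1/α)·1{G ≤ λ_α}, we have E[ξ^α] = 1, 0 ≤ ξ^α ≤ 1/α, and
E[ξ^α G] = CVaR_α(G) = (1/α)∫₀^α F_G⁻¹(u) du. -/
theorem stmt11 {Ω : Type*} [MeasurableSpace Ω] (P : Measure Ω) [IsProbabilityMeasure P]
    (G : Ω → ℝ) (hGm : Measurable G) (hG : Integrable G P)
    (α : ℝ) (hα : α ∈ Set.Ioo (0:ℝ) 1)
    (q : ℝ → ℝ) (hq : ∀ u, q u = sInf {z | u ≤ (P {ω | G ω ≤ z}).toReal})
    (lam : ℝ) (hlam : lam = q α)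
    (hatom : P {ω | G ω = lam} = 0)
    (ξ : Ω → ℝ) (hξ : ∀ ω, ξ ω = if G ω ≤ lam then α⁻¹ else 0) :
    (∫ ω, ξ ω ∂P = 1)
    ∧ (∀ ω, ξ ω ∈ Set.Icc (0:ℝ) α⁻¹)
    ∧ (∫ ω, ξ ω * G ω ∂P = α⁻¹ * ∫ u in Set.Ioc (0:ℝ) α, q u) := by
  classical
  set μ : Measure ℝ := P.map G with hμ
  have hinst : IsProbabilityMeasure μ := Measure.isProbabilityMeasure_map hGm.aemeasurable
  have hmap : ∀ z : ℝ, P {ω | G ω ≤ z} = μ (Set.Iic z) := by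
    intro z
    rw [hμ, Measure.map_apply hGm measurableSet_Iic]
    rfl
  have hqQ : q = CVaRAux.Q μ := by
    funext u
    rw [hq]
    unfold CVaRAux.Q CVaRAux.F
    simp only [hmap]
  have hlam' : lam = CVaRAux.Q μ α := by rw [hlam, hqQ]
  have hatom' : μ {lam} = 0 := by
    rw [hμ, Measure.map_apply hGm (measurableSet_singleton lam)]
    exact hatom
  have hIic : μ (Set.Iic lam) = ENNReal.ofReal α := CVaRAux.measure_Iic_lam hα hlam' hatom'
  have hα0 : (0:ℝ) < α := hα.1
  refine ⟨?_, ?_, ?_⟩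
  · -- E[ξ] = 1
    have hξeq : ξ = Set.indicator (G ⁻¹' Set.Iic lam) (fun _ => α⁻¹) := by
      funext ω
      rw [hξ]
      by_cases h : G ω ≤ lam <;>
        simp [Set.indicator_apply, Set.mem_preimage, Set.mem_Iic, h]
    rw [hξeq, integral_indicator_const _ (hGm measurableSet_Iic)]
    have : P (G ⁻¹' Set.Iic lam) = ENNReal.ofReal α := by
      rw [← hIic, ← hmap]; rfl
    rw [measureReal_def, this, ENNReal.toReal_ofReal hα0.le, smul_eq_mul, mul_inv_cancel₀ hα0.ne']
  · -- bounds
    intro ω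
    rw [hξ]
    by_cases h : G ω ≤ lam <;> simp [h, Set.mem_Icc, inv_nonneg.2 hα0.le]
  · -- E[ξ G] = CVaR
    have hmul : (fun ω => ξ ω * G ω)
        = Set.indicator (G ⁻¹' Set.Iic lam) (fun ω => α⁻¹ * G ω) := by
      funext ω
      rw [hξ]
      by_cases h : G ω ≤ lam <;>
        simp [Set.indicator_apply, Set.mem_preimage, Set.mem_Iic, h]
    calc ∫ ω, ξ ω * G ω ∂P
        = ∫ ω, Set.indicator (G ⁻¹' Set.Iic lam) (fun ω => α⁻¹ * G ω) ω ∂P := by rw [hmul]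
      _ = ∫ ω in G ⁻¹' Set.Iic lam, α⁻¹ * G ω ∂P :=
          integral_indicator (hGm measurableSet_Iic)
      _ = α⁻¹ * ∫ ω in G ⁻¹' Set.Iic lam, G ω ∂P := integral_const_mul _ _
      _ = α⁻¹ * ∫ y in Set.Iic lam, y ∂μ := by
          rw [hμ]
          congr 1
          exact (setIntegral_map measurableSet_Iic aestronglyMeasurable_id
            hGm.aemeasurable).symm
      _ = α⁻¹ * ∫ y, y ∂((volume.restrict (Set.Ioc 0 α)).map (CVaRAux.Q μ)) := by
          rw [CVaRAux.map_Q hα hlam' hatom']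
      _ = α⁻¹ * ∫ u in Set.Ioc (0:ℝ) α, CVaRAux.Q μ u := by
          congr 1
          exact integral_map (CVaRAux.Q_aemeasurable hα) aestronglyMeasurable_id
      _ = α⁻¹ * ∫ u in Set.Ioc (0:ℝ) α, q u := by rw [hqQ]
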